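/- In the weighted plane (ℝ², d_eucl, m) described in the context, there exists a constant C > 0 such that for every n ≥ 1 and every Borel set A ⊆ Ω of finite perimeter, Per(A ∩ cl(T_n); cl(T_n)) ≥ C·(L²(A ∩ T_n))^{1/2}, where cl denotes topological closure and L² is the Lebesgue measure. -/

import Mathlib

open MeasureTheory Metric Set Filter ENNReal NNReal Topology

variable {X : Type*} [PseudoMetricSpace X] [MeasurableSpace X]

/-- The asymptotic Lipschitz constant `lip_a f x = inf_{r>0} Lip(f|_{B_r(x)})`,
computed in `ℝ≥0∞` via the optimal Lipschitz constant on each ball. -/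
noncomputable def lipa (f : X → ℝ) (x : X) : ℝ≥0∞ :=
  ⨅ (r : ℝ) (_ : 0 < r), ⨆ (y : X) (_ : y ∈ ball x r) (z : X) (_ : z ∈ ball x r),
    edist (f y) (f z) / edist y z

/-- `f` is locally Lipschitz on the set `A`. -/
def LocLipOn (f : X → ℝ) (A : Set X) : Prop :=
  ∀ x ∈ A, ∃ r > 0, ball x r ⊆ A ∧ ∃ K : ℝ≥0, LipschitzOnWith K f (ball x r)

/-- `fn → f` in `L¹_loc(μ)`: convergence of the integrals of `|fn n - f|` on bounded sets. -/
def TendstoL1loc (μ : Measure X) (fn : ℕ → X → ℝ) (f : X → ℝ) : Prop :=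
  ∀ S : Set X, Bornology.IsBounded S →
    Tendsto (fun n => ∫⁻ x in S, ENNReal.ofReal |fn n x - f x| ∂μ) atTop (𝓝 0)

/-- Total variation `|Df|(A)` on an open set `A`. -/
noncomputable def totVarOpen (μ : Measure X) (f : X → ℝ) (A : Set X) : ℝ≥0∞ :=
  ⨅ (fn : ℕ → X → ℝ) (_ : ∀ n, LocLipOn (fn n) A) (_ : TendstoL1loc (μ.restrict A) fn f),
    atTop.liminf fun n => ∫⁻ x in A, lipa (fn n) x ∂μ

/-- Total variation `|Df|(B)` of a Borel set `B`, by outer regularization over open sets. -/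
noncomputable def totVar (μ : Measure X) (f : X → ℝ) (B : Set X) : ℝ≥0∞ :=
  ⨅ (A : Set X) (_ : IsOpen A) (_ : B ⊆ A), totVarOpen μ f A

/-- `Per(E; F) = |Dχ_E|_X(F)`. -/
noncomputable def perIn (μ : Measure X) (E F : Set X) : ℝ≥0∞ :=
  totVar μ (E.indicator 1) F

/-- `Per(E) = |Dχ_E|_X(X)`. -/
noncomputable def per (μ : Measure X) (E : Set X) : ℝ≥0∞ := perIn μ E univ

/-- `Per_B(E) = |Dχ_E|_B(B)`: the perimeter of `E` on `B`, computed in `(X, d, μ|_B)`. -/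
noncomputable def perOn (μ : Measure X) (B E : Set X) : ℝ≥0∞ :=
  totVar (μ.restrict B) (E.indicator 1) B

/-- `f ∈ BV(B)`: `f ∈ L¹(μ|_B)` and `|Df|_B(B) < ∞`. -/
def MemBV (μ : Measure X) (B : Set X) (f : X → ℝ) : Prop :=
  Integrable f (μ.restrict B) ∧ totVar (μ.restrict B) f B < ⊤

/-- `‖f‖_{BV(B)} = ‖f‖_{L¹(μ|_B)} + |Df|_B(B)`. -/
noncomputable def bvNorm (μ : Measure X) (B : Set X) (f : X → ℝ) : ℝ≥0∞ :=
  (∫⁻ x in B, ENNReal.ofReal |f x| ∂μ) + totVar (μ.restrict B) f B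

/-- `B` is a `BV`-extension set. -/
def IsBVExtensionSet (μ : Measure X) (B : Set X) : Prop :=
  ∃ C : ℝ, 0 < C ∧ ∀ f : X → ℝ, MemBV μ B f →
    ∃ g : X → ℝ, MemBV μ univ g ∧ EqOn g f B ∧
      bvNorm μ univ g ≤ ENNReal.ofReal C * bvNorm μ B f

/-- The functional `M_λ(A) = Per(A) + λ m(Ω \ A)`. -/
noncomputable def Mfun (μ : Measure X) (Ω : Set X) (lam : ℝ) (A : Set X) : ℝ≥0∞ :=
  per μ A + ENNReal.ofReal lam * μ (Ω \ A)
/-- The Euclidean plane `ℝ²`. -/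
noncomputable abbrev Plane : Type := EuclideanSpace ℝ (Fin 2)

/-- The point `(a, b) ∈ ℝ²`. -/
noncomputable def pt (a b : ℝ) : Plane := WithLp.toLp 2 ![a, b]

/-- The model triangle `T = {(x,y) : y ≥ 0, y < x < 1 - y}`. -/
def Ttri : Set Plane := {p | 0 ≤ p 1 ∧ p 1 < p 0 ∧ p 0 < 1 - p 1}

/-- The triangle `c·T + (a, 0)`. -/
noncomputable def triAt (c a : ℝ) : Set Plane :=
  (fun p : Plane => pt (c * p 0 + a) (c * p 1)) '' Ttri

/-- The triangle `T_n = 2^{-2n+1}·T + (2^{-2n+1}, 0)`. -/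
noncomputable def Tn (n : ℕ) : Set Plane :=
  triAt ((2:ℝ) ^ (1 - 2 * (n:ℤ))) ((2:ℝ) ^ (1 - 2 * (n:ℤ)))

/-- The square `Q = (0,1) × (−1,0)`. -/
def Qset : Set Plane := {p | p 0 ∈ Ioo (0:ℝ) 1 ∧ p 1 ∈ Ioo (-1:ℝ) 0}

/-- The domain `Ω = Q ∪ ⋃_{n ≥ 1} T_n`. -/
noncomputable def Ωset : Set Plane := Qset ∪ ⋃ n : ℕ, Tn (n + 1)

/-- The center `x_n = (2^{-2n+1} + 2^{-2n}, 0)` of the base of `T_n`. -/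
noncomputable def xpt (n : ℕ) : Plane :=
  pt ((2:ℝ) ^ (1 - 2 * (n:ℤ)) + (2:ℝ) ^ (-2 * (n:ℤ))) 0

/-- The weight `w`. -/
noncomputable def wfun (p : Plane) : ℝ≥0∞ :=
  if p 1 ∈ Icc (-1:ℝ) 0 then
    ENNReal.ofReal (min 1 (infDist p {q : Plane | q 1 = -1 ∨ q 1 = 0}))
  else 1

/-- The weighted measure `m = w·L² + Σ_{n ≥ 1} 2^{-n} δ_{x_n}`. -/
noncomputable def mws : Measure Plane :=
  volume.withDensity wfun +
    Measure.sum fun k : ℕ => ((2:ℝ≥0∞) ^ (k + 1))⁻¹ • Measure.dirac (xpt (k + 1))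

/-- The closed upper half-plane `H = ℝ × [0, ∞)`. -/
def Hup : Set Plane := {p | 0 ≤ p 1}



section IsoHelpers
set_option linter.unusedSectionVars false
set_option maxHeartbeats 1000000

noncomputable def slopeSup (f : X → ℝ) (x : X) (r : ℝ) : ℝ≥0∞ :=
  ⨆ (y : X) (_ : y ∈ ball x r) (z : X) (_ : z ∈ ball x r), edist (f y) (f z) / edist y z

lemma lipa_eq (f : X → ℝ) (x : X) : lipa f x = ⨅ (r : ℝ) (_ : 0 < r), slopeSup f x r := rfl

lemma slopeSup_mono (f : X → ℝ) (x : X) {r r' : ℝ} (h : r ≤ r') :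
    slopeSup f x r ≤ slopeSup f x r' := by
  refine iSup₂_le fun y hy => iSup₂_le fun z hz => ?_
  exact le_iSup₂_of_le y (ball_subset_ball h hy) (le_iSup₂_of_le z (ball_subset_ball h hz) le_rfl)

lemma lipa_le_slopeSup (f : X → ℝ) (x : X) {r : ℝ} (hr : 0 < r) :
    lipa f x ≤ slopeSup f x r := by
  rw [lipa_eq]; exact iInf₂_le r hr

lemma le_slopeSup (f : X → ℝ) {x : X} {r : ℝ} {y z : X} (hy : y ∈ ball x r) (hz : z ∈ ball x r) :
    edist (f y) (f z) / edist y z ≤ slopeSup f x r :=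
  le_iSup₂_of_le y hy (le_iSup₂_of_le z hz le_rfl)

lemma slopeSup_le {f : X → ℝ} {x : X} {r : ℝ} {M : ℝ≥0∞}
    (h : ∀ y ∈ ball x r, ∀ z ∈ ball x r, edist (f y) (f z) / edist y z ≤ M) :
    slopeSup f x r ≤ M :=
  iSup₂_le fun y hy => iSup₂_le fun z hz => h y hy z hz

lemma edist_le_slopeSup_mul (f : X → ℝ) {x : X} {r : ℝ} {y z : X}
    (hy : y ∈ ball x r) (hz : z ∈ ball x r) (h0 : edist y z ≠ 0) :
    edist (f y) (f z) ≤ slopeSup f x r * edist y z := by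
  have := le_slopeSup f hy hz
  rwa [ENNReal.div_le_iff_le_mul (Or.inl h0) (Or.inl (edist_ne_top y z))] at this

lemma slopeSup_le_coe {f : X → ℝ} {x : X} {r r' : ℝ} {K : ℝ≥0}
    (h : LipschitzOnWith K f (ball x r')) (hrr' : r ≤ r') : slopeSup f x r ≤ (K : ℝ≥0∞) := by
  refine slopeSup_le fun y hy z hz => ?_
  exact ENNReal.div_le_of_le_mul (h (ball_subset_ball hrr' hy) (ball_subset_ball hrr' hz))

lemma slopeSup_lsc (f : X → ℝ) (r : ℝ) : LowerSemicontinuous fun x => slopeSup f x r := by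
  intro x c hc
  replace hc : c < ⨆ (y : X) (_ : y ∈ ball x r) (z : X) (_ : z ∈ ball x r),
      edist (f y) (f z) / edist y z := hc
  obtain ⟨y, hy⟩ := lt_iSup_iff.1 hc
  obtain ⟨hyb, hy⟩ := lt_iSup_iff.1 hy
  obtain ⟨z, hz⟩ := lt_iSup_iff.1 hy
  obtain ⟨hzb, hterm⟩ := lt_iSup_iff.1 hz
  have hopen : IsOpen {x' : X | dist y x' < r ∧ dist z x' < r} :=
    IsOpen.inter (isOpen_lt (continuous_const.dist continuous_id) continuous_const)
      (isOpen_lt (continuous_const.dist continuous_id) continuous_const)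
  have hmem : x ∈ {x' : X | dist y x' < r ∧ dist z x' < r} := ⟨mem_ball.1 hyb, mem_ball.1 hzb⟩
  filter_upwards [hopen.mem_nhds hmem] with x' hx'
  exact hterm.trans_le (le_slopeSup f (mem_ball.2 hx'.1) (mem_ball.2 hx'.2))

lemma lipa_eq_iInf_rat (f : X → ℝ) (x : X) :
    lipa f x = ⨅ (q : ℚ), ⨅ (_ : 0 < (q : ℝ)), slopeSup f x q := by
  rw [lipa_eq]
  apply le_antisymm
  · exact le_iInf₂ fun q hq => iInf₂_le (q : ℝ) hq
  · refine le_iInf₂ fun r hr => ?_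
    obtain ⟨q, hq0, hqr⟩ := exists_rat_btwn hr
    exact iInf₂_le_of_le q (by exact_mod_cast hq0)
      (slopeSup_mono f x hqr.le)

lemma lipa_measurable [OpensMeasurableSpace X] (f : X → ℝ) : Measurable (lipa f) := by
  have : lipa f = fun x => ⨅ (q : ℚ), ⨅ (_ : 0 < (q : ℝ)), slopeSup f x q := by
    funext x; exact lipa_eq_iInf_rat f x
  rw [this]
  refine Measurable.iInf fun q => ?_
  by_cases hq : 0 < (q : ℝ)
  · simpa [hq] using (slopeSup_lsc f (q : ℝ)).measurable
  · simp [hq]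

lemma lipa_comp_line {Y : Type*} [PseudoMetricSpace Y] [MeasurableSpace Y] (g : Y → ℝ) (L : X → Y)
    (hL : ∀ u v, dist (L u) (L v) = dist u v) (x : X) :
    lipa (fun t => g (L t)) x ≤ lipa g (L x) := by
  have hedist : ∀ u v : X, edist (L u) (L v) = edist u v := by
    intro u v; rw [edist_dist, edist_dist, hL]
  rw [lipa_eq, lipa_eq]
  refine le_iInf₂ fun r hr => iInf₂_le_of_le r hr ?_
  refine slopeSup_le fun u hu v hv => ?_
  have h1 : L u ∈ ball (L x) r := by rw [mem_ball, hL]; exact hu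
  have h2 : L v ∈ ball (L x) r := by rw [mem_ball, hL]; exact hv
  calc edist (g (L u)) (g (L v)) / edist u v
      = edist (g (L u)) (g (L v)) / edist (L u) (L v) := by rw [hedist]
    _ ≤ slopeSup g (L x) r := le_slopeSup g h1 h2

lemma lipa_neg (f : X → ℝ) (x : X) : lipa (fun t => -(f t)) x = lipa f x := by
  rw [lipa_eq, lipa_eq]
  congr 1; ext r; congr 1; ext hr
  rw [slopeSup, slopeSup]
  congr 1; ext y; congr 1; ext hy; congr 1; ext z; congr 1; ext hz
  rw [edist_neg_neg]

lemma jump_le_lintegral_lipa (ψ : ℝ → ℝ) {a b ρ : ℝ} (hab : a ≤ b) (hρ : 0 < ρ) (K : ℝ≥0)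
    (hlip : ∀ x ∈ Icc a b, LipschitzOnWith K ψ (ball x ρ)) :
    ENNReal.ofReal (ψ b - ψ a) ≤ ∫⁻ x in Icc a b, lipa ψ x := by
  -- continuity of ψ near [a,b]
  have hcont : ∀ t ∈ Icc (a - ρ/2) (b + ρ/2), ContinuousAt ψ t := by
    intro t ht
    set x : ℝ := max a (min t b) with hxdef
    have hx : x ∈ Icc a b := ⟨le_max_left _ _, max_le hab (min_le_right _ _)⟩
    have htb : t ∈ ball x ρ := by
      rw [mem_ball, Real.dist_eq, abs_lt]
      rcases le_total t a with h1 | h1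
      · have hx2 : x = a := by
          rw [hxdef, max_eq_left (min_le_of_left_le h1)]
        rw [hx2]; constructor <;> [linarith [ht.1]; linarith]
      · rcases le_total t b with h2 | h2
        · have hx2 : x = t := by rw [hxdef, min_eq_left h2, max_eq_right h1]
          rw [hx2]; constructor <;> linarith
        · have hx2 : x = b := by rw [hxdef, min_eq_right h2, max_eq_right hab]
          rw [hx2]; constructor <;> [linarith; linarith [ht.2]]
    exact ((hlip _ hx).continuousOn).continuousAt (isOpen_ball.mem_nhds htb)
  have hcontOn : ∀ c d : ℝ, a - ρ/2 ≤ c → d ≤ b + ρ/2 → ContinuousOn ψ (Icc c d) := by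
    intro c d hc hd t ht
    exact (hcont t ⟨hc.trans ht.1, ht.2.trans hd⟩).continuousWithinAt
  -- the truncated slope functions
  set Sm : ℕ → ℝ → ℝ≥0∞ := fun m x => slopeSup ψ x (ρ / 2 ^ m) ⊓ (K : ℝ≥0∞) with hSm
  have hSm_meas : ∀ m, Measurable (Sm m) :=
    fun m => ((slopeSup_lsc ψ (ρ / 2 ^ m)).measurable).min measurable_const
  have hSm_le : ∀ m x, Sm m x ≤ (K : ℝ≥0∞) := fun m x => min_le_right _ _
  have hpow : ∀ m : ℕ, (1:ℝ) ≤ 2 ^ m := fun m => one_le_pow₀ one_le_two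
  have hSm_anti : Antitone Sm := by
    intro m m' hmm' x
    refine min_le_min ?_ le_rfl
    have h2 : (2:ℝ) ^ m ≤ 2 ^ m' := by
      apply pow_le_pow_right₀ one_le_two hmm'
    exact slopeSup_mono ψ x (div_le_div_of_nonneg_left hρ.le (by positivity) h2)
  have hJ_fin : ∀ m, ∫⁻ x in Icc a b, Sm m x ≠ ⊤ := by
    intro m
    have hle : ∫⁻ x in Icc a b, Sm m x ≤ (K : ℝ≥0∞) * volume (Icc a b) := by
      calc ∫⁻ x in Icc a b, Sm m x ≤ ∫⁻ _ in Icc a b, (K : ℝ≥0∞) :=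
            lintegral_mono fun x => hSm_le m x
        _ = (K : ℝ≥0∞) * volume (Icc a b) := setLIntegral_const _ _
    refine (hle.trans_lt ?_).ne
    exact ENNReal.mul_lt_top coe_lt_top (by simp [Real.volume_Icc])
  -- key inequality for each m
  have key : ∀ m : ℕ, ψ b - ψ a ≤ (∫⁻ x in Icc a b, Sm m x).toReal := by
    intro m
    set r : ℝ := ρ / 2 ^ m with hr
    have hr0 : 0 < r := by positivity
    have hrρ : r ≤ ρ := by
      rw [hr]; exact div_le_self hρ.le (hpow m)
    set J : ℝ≥0∞ := ∫⁻ x in Icc a b, Sm m x with hJdef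
    -- pointwise slope bound
    have hpw : ∀ h : ℝ, 0 < h → h ≤ r/2 → ∀ x ∈ Icc a b,
        ψ (x + h) - ψ x ≤ h * (Sm m x).toReal := by
      intro h hh hhr x hx
      have hmem1 : x + h ∈ ball x r := by
        rw [mem_ball, Real.dist_eq]
        rw [show x + h - x = h by ring, abs_of_pos hh]
        linarith
      have hmem0 : x ∈ ball x r := mem_ball_self hr0
      have hde : edist (x+h) x = ENNReal.ofReal h := by
        rw [edist_dist, Real.dist_eq, show x + h - x = h by ring, abs_of_pos hh]
      have h0 : edist (x + h) x ≠ 0 := by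
        rw [hde]; simpa using hh
      have h1 : edist (ψ (x+h)) (ψ x) ≤ slopeSup ψ x r * edist (x+h) x :=
        edist_le_slopeSup_mul ψ hmem1 hmem0 h0
      have h2 : edist (ψ (x+h)) (ψ x) ≤ (K : ℝ≥0∞) * edist (x+h) x :=
        (hlip x hx) (ball_subset_ball hrρ hmem1) (ball_subset_ball hrρ hmem0)
      have h3 : edist (ψ (x+h)) (ψ x) ≤ Sm m x * edist (x+h) x := by
        rcases le_total (slopeSup ψ x r) (K : ℝ≥0∞) with hc | hc
        · have hS : Sm m x = slopeSup ψ x r := min_eq_left hc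
          rw [hS]; exact h1
        · have hS : Sm m x = (K : ℝ≥0∞) := min_eq_right hc
          rw [hS]; exact h2
      have hfin : Sm m x * ENNReal.ofReal h ≠ ⊤ :=
        (ENNReal.mul_lt_top ((hSm_le m x).trans_lt coe_lt_top) ofReal_lt_top).ne
      have h4 : ENNReal.ofReal (ψ (x+h) - ψ x) ≤ Sm m x * ENNReal.ofReal h := by
        calc ENNReal.ofReal (ψ (x+h) - ψ x) ≤ edist (ψ (x+h)) (ψ x) := by
              rw [edist_dist, Real.dist_eq]; exact ofReal_le_ofReal (le_abs_self _)
          _ ≤ Sm m x * edist (x+h) x := h3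
          _ = Sm m x * ENNReal.ofReal h := by rw [hde]
      calc ψ (x+h) - ψ x ≤ (Sm m x * ENNReal.ofReal h).toReal := by
            rcases le_or_gt (ψ (x+h) - ψ x) 0 with hle | hlt
            · exact hle.trans ENNReal.toReal_nonneg
            · have h5 := ENNReal.toReal_mono hfin h4
              rwa [ENNReal.toReal_ofReal hlt.le] at h5
        _ = (Sm m x).toReal * h := by
            rw [ENNReal.toReal_mul, ENNReal.toReal_ofReal hh.le]
        _ = h * (Sm m x).toReal := by ring
    -- integrability of the majorant
    have hmaj_int : IntegrableOn (fun x => (Sm m x).toReal) (Icc a b) volume := by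
      refine Integrable.mono' (g := fun _ => (K : ℝ).toNNReal.toReal)
        (integrableOn_const (by simp [Real.volume_Icc]))
        ((hSm_meas m).ennreal_toReal.aestronglyMeasurable) ?_
      refine ae_of_all _ fun x => ?_
      rw [Real.norm_eq_abs, abs_of_nonneg ENNReal.toReal_nonneg]
      simp only [Real.toNNReal_coe]
      exact (ENNReal.toReal_mono coe_ne_top (hSm_le m x)).trans_eq (by simp)
    -- the integral identity and bound, for 0 < h ≤ r/2
    set F : ℝ → ℝ := fun t => ∫ s in a..t, ψ s with hF
    have hIab : IntervalIntegrable ψ volume a b := by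
      apply ContinuousOn.intervalIntegrable
      rw [uIcc_of_le hab]
      exact hcontOn a b (by linarith) (by linarith)
    have hquot : ∀ h : ℝ, 0 < h → h ≤ r/2 →
        (F (b+h) - F b)/h - (F (a+h) - F a)/h ≤ J.toReal := by
      intro h hh hhr
      have hhρ : h ≤ ρ/2 := hhr.trans (by linarith [hrρ])
      have hIa : IntervalIntegrable ψ volume a (a+h) := by
        apply ContinuousOn.intervalIntegrable
        rw [uIcc_of_le (by linarith)]
        exact hcontOn a (a+h) (by linarith) (by linarith)
      have hIb : IntervalIntegrable ψ volume a (b+h) := by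
        apply ContinuousOn.intervalIntegrable
        rw [uIcc_of_le (by linarith)]
        exact hcontOn a (b+h) (by linarith) (by linarith)
      have hIshift : IntervalIntegrable (fun x => ψ (x+h)) volume a b := by
        apply ContinuousOn.intervalIntegrable
        rw [uIcc_of_le hab]
        intro t ht
        have hca : ContinuousAt (fun x : ℝ => x + h) t := by fun_prop
        have hcc : ContinuousAt (ψ ∘ fun x : ℝ => x + h) t :=
          ContinuousAt.comp (hcont (t+h) ⟨by linarith [ht.1], by linarith [ht.2]⟩) hca
        exact hcc.continuousWithinAt
      have hident : ∫ x in a..b, (ψ (x+h) - ψ x) = (F (b+h) - F (a+h)) - (F b - F a) := by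
        have e1 : ∫ x in a..b, ψ (x+h) = F (b+h) - F (a+h) := by
          rw [intervalIntegral.integral_comp_add_right ψ h,
            ← intervalIntegral.integral_interval_sub_left hIb hIa]
        have hFa : F a = 0 := intervalIntegral.integral_same
        rw [intervalIntegral.integral_sub hIshift hIab, e1, hFa, sub_zero]
      have hbound : ∫ x in a..b, (ψ (x+h) - ψ x) ≤ h * J.toReal := by
        have h1 : ∫ x in a..b, (ψ (x+h) - ψ x) ≤ ∫ x in a..b, h * (Sm m x).toReal := by
          apply intervalIntegral.integral_mono_on hab (hIshift.sub hIab)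
          · apply IntervalIntegrable.const_mul
            exact (hmaj_int.mono_set (by rw [uIcc_of_le hab])).intervalIntegrable
          · exact fun x hx => hpw h hh hhr x hx
        have h2 : ∫ x in a..b, h * (Sm m x).toReal = h * ∫ x in a..b, (Sm m x).toReal := by
          rw [intervalIntegral.integral_const_mul]
        have h3 : ∫ x in a..b, (Sm m x).toReal = J.toReal := by
          rw [intervalIntegral.integral_of_le hab, ← integral_Icc_eq_integral_Ioc]
          rw [hJdef, integral_toReal]
          · exact (hSm_meas m).aemeasurable.restrict
          · exact ae_of_all _ fun x => (hSm_le m x).trans_lt coe_lt_top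
        calc ∫ x in a..b, (ψ (x+h) - ψ x) ≤ ∫ x in a..b, h * (Sm m x).toReal := h1
          _ = h * ∫ x in a..b, (Sm m x).toReal := h2
          _ = h * J.toReal := by rw [h3]
      have halg : (F (b+h) - F b)/h - (F (a+h) - F a)/h
          = (∫ x in a..b, (ψ (x+h) - ψ x))/h := by
        rw [hident]; ring
      rw [halg, div_le_iff₀ hh]
      exact hbound.trans_eq (mul_comm _ _)
    -- derivatives at the endpoints
    have hWopen : IsOpen (Ioo (a - ρ/2) (b + ρ/2)) := isOpen_Ioo
    have hWcont : ContinuousOn ψ (Ioo (a - ρ/2) (b + ρ/2)) := fun t ht =>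
      (hcont t ⟨ht.1.le, ht.2.le⟩).continuousWithinAt
    have hslope : ∀ c : ℝ, c ∈ Icc a b →
        Tendsto (fun h : ℝ => (F (c+h) - F c)/h) (𝓝[>] (0:ℝ)) (𝓝 (ψ c)) := by
      intro c hc
      have hc_mem : c ∈ Ioo (a - ρ/2) (b + ρ/2) := ⟨by linarith [hc.1], by linarith [hc.2]⟩
      have hIac : IntervalIntegrable ψ volume a c := by
        apply ContinuousOn.intervalIntegrable
        rw [uIcc_of_le hc.1]
        exact hcontOn a c (by linarith) (by linarith [hc.2])
      have hFc : HasDerivAt F (ψ c) c :=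
        intervalIntegral.integral_hasDerivAt_right hIac
          (hWcont.stronglyMeasurableAtFilter hWopen c hc_mem)
          (hcont c ⟨by linarith [hc.1], by linarith [hc.2]⟩)
      have he : Tendsto (fun h : ℝ => c + h) (𝓝[>] (0:ℝ)) (𝓝[≠] c) := by
        apply tendsto_nhdsWithin_of_tendsto_nhds_of_eventually_within
        · have h0 : Tendsto (fun h : ℝ => c + h) (𝓝 (0:ℝ)) (𝓝 c) := by
            exact (by fun_prop : Continuous fun h : ℝ => c + h).tendsto' 0 c (by simp)
          exact h0.mono_left nhdsWithin_le_nhds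
        · filter_upwards [self_mem_nhdsWithin] with h (hh : 0 < h)
          simp [hh.ne']
      have h1 := (hasDerivAt_iff_tendsto_slope.1 hFc).comp he
      apply h1.congr
      intro h
      simp only [Function.comp_apply, slope_def_field]
      rw [add_sub_cancel_left]
    have hlim : Tendsto (fun h : ℝ => (F (b+h) - F b)/h - (F (a+h) - F a)/h)
        (𝓝[>] (0:ℝ)) (𝓝 (ψ b - ψ a)) :=
      (hslope b ⟨hab, le_rfl⟩).sub (hslope a ⟨le_rfl, hab⟩)
    refine le_of_tendsto hlim ?_
    filter_upwards [Ioc_mem_nhdsGT_of_mem (Set.mem_Ico.2 ⟨le_rfl, half_pos hr0⟩)] with h hh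
    exact hquot h hh.1 hh.2
  -- pass to the limit in m
  have hofreal : ∀ m, ENNReal.ofReal (ψ b - ψ a) ≤ ∫⁻ x in Icc a b, Sm m x := by
    intro m
    calc ENNReal.ofReal (ψ b - ψ a)
        ≤ ENNReal.ofReal ((∫⁻ x in Icc a b, Sm m x).toReal) := ofReal_le_ofReal (key m)
      _ = ∫⁻ x in Icc a b, Sm m x := ofReal_toReal (hJ_fin m)
  have hiInf : ENNReal.ofReal (ψ b - ψ a) ≤ ∫⁻ x in Icc a b, ⨅ m, Sm m x := by
    rw [lintegral_iInf (fun m => hSm_meas m) hSm_anti (hJ_fin 0)]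
    exact le_iInf hofreal
  refine hiInf.trans (lintegral_mono fun x => ?_)
  rw [lipa_eq]
  refine le_iInf₂ fun s hs => ?_
  obtain ⟨m, hm⟩ := pow_unbounded_of_one_lt (ρ / s) (one_lt_two)
  have hms : ρ / 2 ^ m ≤ s := by
    rw [div_le_iff₀ (by positivity)]
    rw [div_lt_iff₀ hs] at hm
    nlinarith [hpow m]
  exact (iInf_le _ m).trans ((min_le_left _ _).trans (slopeSup_mono ψ x hms))


lemma jump_abs_le_lintegral_lipa (ψ : ℝ → ℝ) {a b ρ : ℝ} (hab : a ≤ b) (hρ : 0 < ρ) (K : ℝ≥0)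
    (hlip : ∀ x ∈ Icc a b, LipschitzOnWith K ψ (ball x ρ)) :
    ENNReal.ofReal |ψ b - ψ a| ≤ ∫⁻ x in Icc a b, lipa ψ x := by
  rcases le_total (ψ a) (ψ b) with h | h
  · rw [abs_of_nonneg (by linarith)]
    exact jump_le_lintegral_lipa ψ hab hρ K hlip
  · rw [abs_of_nonpos (by linarith)]
    have hneg := jump_le_lintegral_lipa (fun t => -(ψ t)) hab hρ K (fun x hx => (hlip x hx).neg)
    calc ENNReal.ofReal (-(ψ b - ψ a))
        = ENNReal.ofReal ((fun t => -(ψ t)) b - (fun t => -(ψ t)) a) := by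
          congr 1; ring
      _ ≤ ∫⁻ x in Icc a b, lipa (fun t => -(ψ t)) x := hneg
      _ = ∫⁻ x in Icc a b, lipa ψ x := lintegral_congr fun x => lipa_neg ψ x

namespace IsoHelp

lemma pt_zero (a b : ℝ) : (pt a b) 0 = a := rfl
lemma pt_one (a b : ℝ) : (pt a b) 1 = b := rfl
lemma pt_eta (p : Plane) : pt (p 0) (p 1) = p := by
  ext i; fin_cases i <;> simp [pt]

lemma continuous_coord (i : Fin 2) : Continuous fun p : Plane => p i := PiLp.continuous_apply 2 _ i
lemma measurable_coord (i : Fin 2) : Measurable fun p : Plane => p i :=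
  (continuous_coord i).measurable

lemma pt_continuous {α : Type*} [TopologicalSpace α] {f g : α → ℝ} (hf : Continuous f)
    (hg : Continuous g) : Continuous fun s => pt (f s) (g s) := by
  show Continuous fun s => WithLp.toLp 2 ![f s, g s]
  apply (PiLp.continuous_toLp 2 _).comp
  apply continuous_pi
  intro i; fin_cases i <;> simpa [pt] using ‹_›

lemma dist_pt_horiz (u v y : ℝ) : dist (pt u y) (pt v y) = |u - v| := by
  rw [EuclideanSpace.dist_eq, Fin.sum_univ_two]
  simp only [pt_zero, pt_one, Real.dist_eq, sub_self, abs_zero]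
  norm_num [Real.sqrt_sq_eq_abs]

lemma dist_pt_vert (x u v : ℝ) : dist (pt x u) (pt x v) = |u - v| := by
  rw [EuclideanSpace.dist_eq, Fin.sum_univ_two]
  simp only [pt_zero, pt_one, Real.dist_eq]
  rw [show |x - x| = 0 by simp]
  norm_num [Real.sqrt_sq_eq_abs]

lemma dist_coord_le (p q : Plane) {M0 M1 : ℝ} (h0 : |p 0 - q 0| ≤ M0) (h1 : |p 1 - q 1| ≤ M1) :
    dist p q ≤ M0 + M1 := by
  have hM0 : 0 ≤ M0 := le_trans (abs_nonneg _) h0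
  have hM1 : 0 ≤ M1 := le_trans (abs_nonneg _) h1
  rw [EuclideanSpace.dist_eq, Fin.sum_univ_two]
  have hsq : dist (p 0) (q 0) ^ 2 + dist (p 1) (q 1) ^ 2 ≤ (M0 + M1) ^ 2 := by
    rw [Real.dist_eq, Real.dist_eq]
    nlinarith [sq_abs (p 0 - q 0), sq_abs (p 1 - q 1), abs_nonneg (p 0 - q 0),
      abs_nonneg (p 1 - q 1)]
  calc √(dist (p 0) (q 0) ^ 2 + dist (p 1) (q 1) ^ 2) ≤ √((M0 + M1)^2) :=
        Real.sqrt_le_sqrt hsq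
    _ = M0 + M1 := Real.sqrt_sq (by linarith)

noncomputable def cfn (n : ℕ) : ℝ := (2:ℝ) ^ (1 - 2 * (n:ℤ))
lemma cfn_pos (n : ℕ) : 0 < cfn n := zpow_pos two_pos _

lemma mem_Tn_iff {n : ℕ} {p : Plane} :
    p ∈ Tn n ↔ 0 ≤ p 1 ∧ cfn n + p 1 < p 0 ∧ p 0 < 2 * cfn n - p 1 := by
  have hc := cfn_pos n
  have hl : (2:ℝ)^(1 - 2*(n:ℤ)) = cfn n := rfl
  constructor
  · rintro ⟨q, hq, rfl⟩
    obtain ⟨h0, h1, h2⟩ := hq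
    simp only [pt_zero, pt_one, hl]
    refine ⟨by positivity, ?_, ?_⟩
    · nlinarith [mul_lt_mul_of_pos_left h1 hc]
    · nlinarith [mul_lt_mul_of_pos_left h2 hc]
  · rintro ⟨h0, h1, h2⟩
    refine ⟨pt ((p 0 - cfn n)/cfn n) (p 1 / cfn n), ⟨?_, ?_, ?_⟩, ?_⟩
    · simp only [pt_one]; positivity
    · simp only [pt_zero, pt_one]
      gcongr
      · linarith
    · simp only [pt_zero, pt_one]
      rw [div_lt_iff₀ hc, sub_mul, one_mul, div_mul_cancel₀ _ hc.ne']
      linarith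
    · show pt (cfn n * ((p 0 - cfn n)/cfn n) + cfn n) (cfn n * (p 1 / cfn n)) = p
      have e0 : cfn n * ((p 0 - cfn n)/cfn n) + cfn n = p 0 := by field_simp; ring
      have e1 : cfn n * (p 1 / cfn n) = p 1 := by field_simp
      rw [e0, e1, pt_eta]

def Kset (n : ℕ) : Set Plane :=
  {p | 0 ≤ p 1 ∧ cfn n + p 1 ≤ p 0 ∧ p 0 ≤ 2 * cfn n - p 1}

lemma isClosed_Kset (n : ℕ) : IsClosed (Kset n) := by
  apply IsClosed.inter
  · exact isClosed_le continuous_const (continuous_coord 1)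
  · apply IsClosed.inter
    · exact isClosed_le (continuous_const.add (continuous_coord 1)) (continuous_coord 0)
    · exact isClosed_le (continuous_coord 0) (continuous_const.sub (continuous_coord 1))

lemma Tn_subset_Kset (n : ℕ) : Tn n ⊆ Kset n := by
  intro p hp
  rw [mem_Tn_iff] at hp
  exact ⟨hp.1, hp.2.1.le, hp.2.2.le⟩

lemma closure_Tn_subset (n : ℕ) : closure (Tn n) ⊆ Kset n :=
  closure_minimal (Tn_subset_Kset n) (isClosed_Kset n)

lemma mem_closure_Tn {n : ℕ} {t y : ℝ} (h0 : 0 ≤ y) (h1 : cfn n + y ≤ t)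
    (h2 : t ≤ 2 * cfn n - y) : pt t y ∈ closure (Tn n) := by
  have hc := cfn_pos n
  set c := cfn n with hcdef
  have hw : ∀ s : ℝ, 0 < s → s ≤ 1 →
      pt ((1-s)*t + s*(3*c/2)) ((1-s)*y + s*(c/4)) ∈ Tn n := by
    intro s hs hs1
    rw [mem_Tn_iff]
    simp only [pt_zero, pt_one, ← hcdef]
    have hy1 : 0 ≤ 1 - s := by linarith
    refine ⟨by positivity, ?_, ?_⟩
    · nlinarith [mul_le_mul_of_nonneg_left h1 hy1, mul_pos hs hc]
    · nlinarith [mul_le_mul_of_nonneg_left h2 hy1, mul_pos hs hc]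
  have hcontf : Continuous fun s : ℝ => pt ((1-s)*t + s*(3*c/2)) ((1-s)*y + s*(c/4)) :=
    pt_continuous (by fun_prop) (by fun_prop)
  have htend : Tendsto (fun s : ℝ => pt ((1-s)*t + s*(3*c/2)) ((1-s)*y + s*(c/4)))
      (𝓝[>] (0:ℝ)) (𝓝 (pt t y)) := by
    have h := hcontf.tendsto' 0 (pt t y) (by norm_num)
    exact h.mono_left nhdsWithin_le_nhds
  apply mem_closure_of_tendsto htend
  filter_upwards [Ioc_mem_nhdsGT_of_mem (Set.mem_Ico.2 ⟨le_rfl, one_pos⟩)] with s hs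
  exact hw s hs.1 hs.2

lemma isBounded_Kset (n : ℕ) : Bornology.IsBounded (Kset n) := by
  have hc := cfn_pos n
  rw [Metric.isBounded_iff]
  refine ⟨2 * cfn n, fun p hp q hq => ?_⟩
  obtain ⟨hp0, hp1, hp2⟩ := hp
  obtain ⟨hq0, hq1, hq2⟩ := hq
  have := dist_coord_le p q (M0 := cfn n) (M1 := cfn n)
  apply (dist_coord_le p q (M0 := cfn n) (M1 := cfn n) ?_ ?_).trans_eq (by ring)
  · rw [abs_le]; constructor <;> nlinarith
  · rw [abs_le]; constructor <;> nlinarith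

lemma isCompact_closure_Tn (n : ℕ) : IsCompact (closure (Tn n)) := by
  apply Metric.isCompact_of_isClosed_isBounded isClosed_closure
  exact ((isBounded_Kset n).subset (closure_Tn_subset n))

lemma measurableSet_Tn (n : ℕ) : MeasurableSet (Tn n) := by
  have : Tn n = {p : Plane | 0 ≤ p 1 ∧ cfn n + p 1 < p 0 ∧ p 0 < 2 * cfn n - p 1} := by
    ext p; exact mem_Tn_iff
  rw [this]
  apply MeasurableSet.inter
  · exact measurableSet_le measurable_const (measurable_coord 1)
  · apply MeasurableSet.inter
    · exact measurableSet_lt (measurable_const.add (measurable_coord 1)) (measurable_coord 0)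
    · exact measurableSet_lt (measurable_coord 0) (measurable_const.sub (measurable_coord 1))

noncomputable def Tmap : ℝ × ℝ → Plane := fun q => pt q.1 q.2

lemma Tmap_mp : MeasurePreserving Tmap volume volume :=
  ((EuclideanSpace.volume_preserving_symm_measurableEquiv_toLp (Fin 2)).symm).comp
    ((volume_preserving_finTwoArrow ℝ).symm)

noncomputable def Teqv : (ℝ × ℝ) ≃ᵐ Plane :=
  (MeasurableEquiv.finTwoArrow (α := ℝ)).symm.trans
    (MeasurableEquiv.toLp 2 (Fin 2 → ℝ))

lemma Teqv_coe : ⇑Teqv = Tmap := by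
  funext q
  show (MeasurableEquiv.toLp 2 (Fin 2 → ℝ))
    ((MeasurableEquiv.finTwoArrow (α := ℝ)).symm q) = pt q.1 q.2
  rfl

lemma Tmap_emb : MeasurableEmbedding Tmap := by
  rw [← Teqv_coe]; exact Teqv.measurableEmbedding

lemma Tmap_cont : Continuous Tmap :=
  pt_continuous continuous_fst continuous_snd

lemma volume_line_zero : (volume : Measure Plane) {p : Plane | p 1 = 0} = 0 := by
  have hms : MeasurableSet {p : Plane | p 1 = 0} :=
    measurableSet_eq_fun (measurable_coord 1) measurable_const
  have h := Tmap_mp.measure_preimage hms.nullMeasurableSet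
  have hpre : Tmap ⁻¹' {p : Plane | p 1 = 0} = (univ : Set ℝ) ×ˢ ({0} : Set ℝ) := by
    ext ⟨x, y⟩; simp [Tmap, pt_one]
  rw [hpre] at h
  rw [← h, Measure.volume_eq_prod, Measure.prod_prod]
  simp




lemma mws_ge (s : Set Plane) (hs : MeasurableSet s) :
    (volume : Measure Plane).restrict {p : Plane | 0 < p 1} s ≤ mws s := by
  have hP : MeasurableSet {p : Plane | 0 < p 1} :=
    measurableSet_lt measurable_const (measurable_coord 1)
  rw [Measure.restrict_apply hs, mws, Measure.add_apply]
  refine le_add_right ?_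
  rw [withDensity_apply _ hs]
  calc volume (s ∩ {p : Plane | 0 < p 1})
      = ∫⁻ _ in s ∩ {p : Plane | 0 < p 1}, 1 ∂volume := by rw [setLIntegral_one]
    _ = ∫⁻ p in s ∩ {p : Plane | 0 < p 1}, wfun p ∂volume := by
        apply setLIntegral_congr_fun (hs.inter hP)
        intro p hp
        have hnot : ¬ (p 1 ∈ Icc (-1:ℝ) 0) := fun hmem => absurd hmem.2 (not_le.2 hp.2)
        rw [wfun, if_neg hnot]
    _ ≤ ∫⁻ p in s, wfun p ∂volume := lintegral_mono_set inter_subset_left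

lemma loclip_compact {g : X → ℝ} {U C : Set X} (hg : LocLipOn g U)
    (hC : IsCompact C) (hCU : C ⊆ U) :
    ∃ ρ > 0, ∃ K : ℝ≥0, ∀ p ∈ C, LipschitzOnWith K g (ball p ρ) := by
  rcases eq_empty_or_nonempty C with rfl | hCne
  · exact ⟨1, one_pos, 0, by simp⟩
  have h : ∀ p : C, ∃ r, 0 < r ∧ ∃ K : ℝ≥0, LipschitzOnWith K g (ball (p : X) r) := by
    rintro ⟨p, hp⟩
    obtain ⟨r, hr, _, K, hK⟩ := hg p (hCU hp)
    exact ⟨r, hr, K, hK⟩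
  choose r hr K hK using h
  obtain ⟨t, ht⟩ := hC.elim_nhds_subcover' (fun x hx => ball x (r ⟨x, hx⟩ / 2))
    (fun x hx => ball_mem_nhds x (half_pos (hr ⟨x, hx⟩)))
  have htne : t.Nonempty := by
    obtain ⟨x, hx⟩ := hCne
    have := ht hx
    rw [mem_iUnion₂] at this
    obtain ⟨i, hi, _⟩ := this
    exact ⟨i, hi⟩
  refine ⟨t.inf' htne (fun x => r x / 2), ?_, t.sup (fun x => K x), ?_⟩
  · rw [gt_iff_lt, Finset.lt_inf'_iff]
    intro x _
    exact half_pos (hr x)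
  · intro p hp
    have := ht hp
    rw [mem_iUnion₂] at this
    obtain ⟨q, hq, hpq⟩ := this
    have hsub : ball p (t.inf' htne (fun x => r x / 2)) ⊆ ball (q : X) (r q) := by
      intro z hz
      rw [mem_ball] at hz hpq ⊢
      have hle : t.inf' htne (fun x => r x / 2) ≤ r q / 2 := Finset.inf'_le _ hq
      calc dist z q ≤ dist z p + dist p q := dist_triangle _ _ _
        _ < r q / 2 + r q / 2 := by
            apply add_lt_add_of_lt_of_lt (hz.trans_le hle) hpq
        _ = r q := by ring
    intro z hz w hw
    exact ((hK q).mono hsub hz hw).trans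
      (mul_le_mul_left (ENNReal.coe_le_coe.2 (Finset.le_sup hq)) _)

lemma measurable_indicator_of_continuousOn {α : Type*} [TopologicalSpace α] [MeasurableSpace α]
    [OpensMeasurableSpace α] {s : Set α} {f : α → ℝ} (hs : IsOpen s) (hf : ContinuousOn f s) :
    Measurable (s.indicator f) := by
  classical
  have h1 : Measurable fun x : s => f (x : α) :=
    (continuousOn_iff_continuous_restrict.1 hf).measurable
  have h2 : Measurable fun _ : ↥(sᶜ) => (0:ℝ) := measurable_const
  have h3 := Measurable.dite (s := s) h1 h2 hs.measurableSet
  have : s.indicator f = fun x => if hx : x ∈ s then f x else (0:ℝ) := by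
    funext x
    by_cases hx : x ∈ s <;> simp [Set.indicator, hx]
  rw [this]
  exact h3

lemma le_liminf_add_of_tendsto {u v : ℕ → ℝ≥0∞} {c : ℝ≥0∞}
    (h : ∀ k, c ≤ u k + v k) (hv : Tendsto v atTop (𝓝 0)) : c ≤ atTop.liminf u := by
  refine ENNReal.le_of_forall_pos_le_add fun ε hε _ => ?_
  have hev : ∀ᶠ k in atTop, v k ≤ (ε : ℝ≥0∞) := by
    apply hv.eventually_le_const
    exact_mod_cast hε
  have hev2 : ∀ᶠ k in atTop, c - (ε : ℝ≥0∞) ≤ u k := by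
    filter_upwards [hev] with k hk
    rw [tsub_le_iff_right]
    exact (h k).trans (add_le_add le_rfl hk)
  have := le_liminf_of_le (u := u) (f := atTop) (a := c - (ε:ℝ≥0∞)) (by isBoundedDefault) hev2
  rwa [tsub_le_iff_right] at this

lemma prod_slice_bound (F : Set (ℝ × ℝ)) (hF : MeasurableSet F) :
    (volume : Measure (ℝ × ℝ)) F ≤
      volume {x : ℝ | 0 < volume {t : ℝ | (x, t) ∈ F}} *
        volume {y : ℝ | 0 < volume {x : ℝ | (x, y) ∈ F}} := by
  set V := {x : ℝ | 0 < volume {t : ℝ | (x, t) ∈ F}} with hV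
  set G := {y : ℝ | 0 < volume {x : ℝ | (x, y) ∈ F}} with hG
  have hGmeas : MeasurableSet G := by
    have : Measurable fun y : ℝ => volume ((fun x : ℝ => (x, y)) ⁻¹' F) :=
      measurable_measure_prodMk_right hF
    exact measurableSet_lt measurable_const this
  have h1 : (volume : Measure (ℝ × ℝ)) (F \ (univ ×ˢ G)) = 0 := by
    have hmeas : MeasurableSet (F \ (univ ×ˢ G)) :=
      hF.diff (MeasurableSet.univ.prod hGmeas)
    rw [Measure.volume_eq_prod, Measure.prod_apply_symm hmeas]
    rw [lintegral_eq_zero_iff (measurable_measure_prodMk_right hmeas)]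
    refine ae_of_all _ fun y => ?_
    by_cases hy : y ∈ G
    · have : ((fun x : ℝ => (x, y)) ⁻¹' (F \ (univ ×ˢ G))) = ∅ := by
        ext x; simp [hy]
      simp [this]
    · have hy0 : volume {x : ℝ | (x, y) ∈ F} = 0 := by
        by_contra h0
        exact hy (pos_iff_ne_zero.2 h0)
      refine measure_mono_null ?_ hy0
      intro x hx
      exact hx.1
  have h2 : (volume : Measure (ℝ × ℝ)) (F ∩ (univ ×ˢ G)) ≤ volume V * volume G := by
    rw [Measure.volume_eq_prod, Measure.prod_apply (hF.inter (MeasurableSet.univ.prod hGmeas))]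
    have hpt : ∀ x : ℝ, volume (Prod.mk x ⁻¹' (F ∩ (univ ×ˢ G))) ≤
        V.indicator (fun _ => volume G) x := by
      intro x
      by_cases hx : x ∈ V
      · rw [indicator_of_mem hx]
        refine measure_mono fun t ht => ?_
        exact ht.2.2
      · rw [indicator_of_notMem hx]
        have hx0 : volume {t : ℝ | (x, t) ∈ F} = 0 := by
          by_contra h0
          exact hx (pos_iff_ne_zero.2 h0)
        exact le_of_eq (measure_mono_null (fun t ht => ht.1) hx0)
    calc ∫⁻ x, volume (Prod.mk x ⁻¹' (F ∩ (univ ×ˢ G))) ≤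
          ∫⁻ x, V.indicator (fun _ => volume G) x := lintegral_mono hpt
      _ = volume G * volume V := by
          rw [lintegral_indicator ?_ ]
          · rw [setLIntegral_const]
          · rw [hV]
            exact measurableSet_lt measurable_const (measurable_measure_prodMk_left hF)
      _ = volume V * volume G := mul_comm _ _
  calc (volume : Measure (ℝ × ℝ)) F ≤
        volume (F ∩ (univ ×ˢ G)) + volume (F \ (univ ×ˢ G)) :=
          measure_le_inter_add_diff _ _ _
    _ = volume (F ∩ (univ ×ˢ G)) := by rw [h1, add_zero]
    _ ≤ volume V * volume G := h2



end IsoHelp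
end IsoHelpers


section IsoCore
set_option linter.unusedSectionVars false
set_option maxHeartbeats 2000000
open IsoHelp

lemma iso_core (n : ℕ) (U : Set Plane) (hUopen : IsOpen U)
    (fn : ℕ → Plane → ℝ) (hLip : ∀ k, LocLipOn (fn k) U)
    (f : Plane → ℝ) (hfmeas : Measurable f)
    (hconv : TendstoL1loc (mws.restrict U) fn f)
    (δ : ℝ) (hδ : 0 < δ)
    (hthick : thickening δ (closure (Tn n)) ⊆ U)
    (E'' : Set Plane) (hE''meas : MeasurableSet E'')
    (L : ℝ → ℝ → Plane)
    (hTmapL : MeasurePreserving (fun q : ℝ × ℝ => L q.1 q.2) volume volume)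
    (hTembL : MeasurableEmbedding (fun q : ℝ × ℝ => L q.1 q.2))
    (hLcont : Continuous (fun q : ℝ × ℝ => L q.1 q.2))
    (hiso : ∀ y u v : ℝ, dist (L u y) (L v y) = |u - v|)
    (hER : E'' ⊆ thickening δ (closure (Tn n)) ∩ {p : Plane | 0 < p 1})
    (hf1 : ∀ p ∈ E'', f p = 1)
    (hgeom : ∀ y x₁ : ℝ, L x₁ y ∈ E'' → ∃ x₀, x₁ + δ/2 ≤ x₀ ∧
      (∀ t ∈ Icc x₁ x₀, L t y ∈ thickening δ (closure (Tn n)) ∩ {p : Plane | 0 < p 1}) ∧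
      (∀ t ∈ Ioc (x₀ - δ/2) x₀, f (L t y) = 0)) :
    ENNReal.ofReal 2⁻¹ * volume {y : ℝ | 0 < volume {x : ℝ | L x y ∈ E''}} ≤
      atTop.liminf fun k => ∫⁻ p in U, lipa (fn k) p ∂mws := by
  classical
  set R : Set Plane := thickening δ (closure (Tn n)) ∩ {p : Plane | 0 < p 1} with hRdef
  have hRopen : IsOpen R :=
    isOpen_thickening.inter (isOpen_lt continuous_const (continuous_coord 1))
  have hRmeas : MeasurableSet R := hRopen.measurableSet
  have hRU : R ⊆ U := fun p hp => hthick hp.1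
  have hRP : R ⊆ {p : Plane | 0 < p 1} := fun p hp => hp.2
  have hRbdd : Bornology.IsBounded R := by
    have hb := (isBounded_Kset n).subset (closure_Tn_subset n)
    rw [Metric.isBounded_iff] at hb ⊢
    obtain ⟨C, hC⟩ := hb
    refine ⟨δ + C + δ, fun p hp q hq => ?_⟩
    obtain ⟨zp, hzp, hdzp⟩ := Metric.mem_thickening_iff.1 hp.1
    obtain ⟨zq, hzq, hdzq⟩ := Metric.mem_thickening_iff.1 hq.1
    calc dist p q ≤ dist p zp + dist zp zq + dist zq q := dist_triangle4 _ _ _ _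
      _ ≤ δ + C + δ := by
          have h2 := hC hzp hzq
          have h3 : dist zq q = dist q zq := dist_comm _ _
          linarith [hdzp.le, hdzq.le]
  set T : ℝ × ℝ → Plane := fun q => L q.1 q.2 with hTdef
  have hTmeas : Measurable T := hTembL.measurable
  set RF : Set (ℝ × ℝ) := T ⁻¹' R with hRFdef
  have hRFopen : IsOpen RF := hRopen.preimage hLcont
  have hRFmeas : MeasurableSet RF := hRFopen.measurableSet
  have hfn_cont : ∀ k, ContinuousOn (fn k) U := by
    intro k p hp
    obtain ⟨r, hr, _, K, hK⟩ := hLip k p hp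
    exact (hK.continuousOn.continuousAt (isOpen_ball.mem_nhds (mem_ball_self hr))).continuousWithinAt
  set Gk : ℕ → ℝ × ℝ → ℝ := fun k => (T ⁻¹' U).indicator (fun q => fn k (T q)) with hGkdef
  have hGk_meas : ∀ k, Measurable (Gk k) := by
    intro k
    apply measurable_indicator_of_continuousOn (hUopen.preimage hLcont)
    exact (hfn_cont k).comp hLcont.continuousOn (fun q hq => hq)
  set Ψ : ℕ → ℝ × ℝ → ℝ≥0∞ :=
    fun k => RF.indicator fun q => ENNReal.ofReal |Gk k q - f (T q)| with hΨdef
  have hΨ_meas : ∀ k, Measurable (Ψ k) := by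
    intro k
    apply Measurable.indicator ?_ hRFmeas
    exact ENNReal.measurable_ofReal.comp (((hGk_meas k).sub (hfmeas.comp hTmeas)).abs)
  set Φ : ℕ → ℝ × ℝ → ℝ≥0∞ := fun k => RF.indicator fun q => lipa (fn k) (T q) with hΦdef
  have hΦ_meas : ∀ k, Measurable (Φ k) := by
    intro k
    exact (((lipa_measurable (fn k)).comp hTmeas)).indicator hRFmeas
  have hΨ_eq : ∀ k q, Ψ k q = (R.indicator fun p => ENNReal.ofReal |fn k p - f p|) (T q) := by
    intro k q
    by_cases hq : q ∈ RF
    · rw [hΨdef]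
      simp only []
      rw [indicator_of_mem hq, indicator_of_mem (by exact hq : T q ∈ R)]
      rw [hGkdef]
      simp only []
      rw [indicator_of_mem (by exact hRU hq : q ∈ T ⁻¹' U)]
    · rw [hΨdef]
      simp only []
      rw [indicator_of_notMem hq, indicator_of_notMem (by exact hq : T q ∉ R)]
  have hΦ_eq : ∀ k q, Φ k q = (R.indicator fun p => lipa (fn k) p) (T q) := by
    intro k q
    by_cases hq : q ∈ RF
    · rw [hΦdef]
      simp only []
      rw [indicator_of_mem hq, indicator_of_mem (by exact hq : T q ∈ R)]
    · rw [hΦdef]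
      simp only []
      rw [indicator_of_notMem hq, indicator_of_notMem (by exact hq : T q ∉ R)]
  -- comparison of measures on R
  have hrestr : (volume : Measure Plane).restrict R ≤ (mws.restrict U).restrict R := by
    rw [Measure.le_iff]
    intro s hs
    rw [Measure.restrict_apply hs, Measure.restrict_apply hs,
      Measure.restrict_apply (hs.inter hRmeas)]
    have h1 : volume (s ∩ R) ≤ (volume : Measure Plane).restrict {p : Plane | 0 < p 1} (s ∩ R) := by
      rw [Measure.restrict_apply (hs.inter hRmeas)]
      exact measure_mono fun p hp => ⟨hp, hRP hp.2⟩
    refine h1.trans ?_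
    refine le_trans (mws_ge _ (hs.inter hRmeas)) ?_
    exact measure_mono fun p hp => ⟨hp, hRU hp.2⟩
  -- Θ and its convergence
  set Θ : ℕ → ℝ≥0∞ := fun k => ∫⁻ q, Ψ k q with hΘdef
  have hΘ_eq : ∀ k, Θ k = ∫⁻ p in R, ENNReal.ofReal |fn k p - f p| ∂(volume : Measure Plane) := by
    intro k
    calc Θ k = ∫⁻ q, (R.indicator fun p => ENNReal.ofReal |fn k p - f p|) (T q) :=
          lintegral_congr fun q => hΨ_eq k q
      _ = ∫⁻ p, (R.indicator fun p => ENNReal.ofReal |fn k p - f p|) p ∂(volume : Measure Plane) := by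
          rw [← hTmapL.map_eq, hTembL.lintegral_map]
      _ = ∫⁻ p in R, ENNReal.ofReal |fn k p - f p| ∂(volume : Measure Plane) :=
          lintegral_indicator hRmeas _
  have hΘ_le : ∀ k, Θ k ≤ ∫⁻ p in R, ENNReal.ofReal |fn k p - f p| ∂(mws.restrict U) := by
    intro k
    rw [hΘ_eq k]
    exact lintegral_mono' hrestr le_rfl
  have hΘ0 : Tendsto Θ atTop (𝓝 0) := by
    have h := hconv R hRbdd
    exact tendsto_of_tendsto_of_tendsto_of_le_of_le tendsto_const_nhds h
      (fun k => by simp) hΘ_le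
  -- lower bound for the energy
  have hX_ge : ∀ k, (∫⁻ y, ∫⁻ x, Φ k (x, y)) ≤ ∫⁻ p in U, lipa (fn k) p ∂mws := by
    intro k
    have h1 : (∫⁻ y, ∫⁻ x, Φ k (x, y)) = ∫⁻ q, Φ k q ∂(volume : Measure (ℝ × ℝ)) := by
      rw [Measure.volume_eq_prod]
      exact (lintegral_prod_symm _ ((hΦ_meas k).aemeasurable)).symm
    rw [h1]
    calc ∫⁻ q, Φ k q ∂(volume : Measure (ℝ × ℝ))
        = ∫⁻ p, (R.indicator fun p => lipa (fn k) p) p ∂(volume : Measure Plane) := by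
          rw [← hTmapL.map_eq, hTembL.lintegral_map]
          exact lintegral_congr fun q => (hΦ_eq k q)
      _ = ∫⁻ p in R, lipa (fn k) p ∂(volume : Measure Plane) := lintegral_indicator hRmeas _
      _ ≤ ∫⁻ p in R, lipa (fn k) p ∂(mws.restrict U) := lintegral_mono' hrestr le_rfl
      _ ≤ ∫⁻ p in U, lipa (fn k) p ∂mws := lintegral_mono' Measure.restrict_le_self le_rfl
  -- slice measures
  set slm : ℝ → ℝ≥0∞ := fun y => volume {x : ℝ | L x y ∈ E''} with hslmdef
  have hFE : MeasurableSet (T ⁻¹' E'') := hTmeas hE''meas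
  have hslm_meas : Measurable slm := by
    have h := measurable_measure_prodMk_right (μ := (volume : Measure ℝ)) hFE
    exact h
  have hslice_meas : ∀ y : ℝ, MeasurableSet {x : ℝ | L x y ∈ E''} := by
    intro y
    have : Measurable fun x : ℝ => T (x, y) := hTmeas.comp (measurable_id.prodMk measurable_const)
    exact this hE''meas
  set θ : ℕ → ℝ → ℝ≥0∞ := fun k y => ∫⁻ x, Ψ k (x, y) with hθdef
  have hθ_meas : ∀ k, Measurable (θ k) := fun k => (hΨ_meas k).lintegral_prod_left'
  have hθ_int : ∀ k, (∫⁻ y, θ k y) = Θ k := by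
    intro k
    rw [hΘdef]
    simp only []
    rw [Measure.volume_eq_prod]
    exact (lintegral_prod_symm _ ((hΨ_meas k).aemeasurable)).symm
  -- the key per-line jump estimate
  have hjump : ∀ (m k : ℕ) (y : ℝ),
      ((m : ℝ≥0∞) + 1)⁻¹ ≤ min (slm y) (ENNReal.ofReal (δ/2)) →
      θ k y < ENNReal.ofReal 4⁻¹ * ((m : ℝ≥0∞) + 1)⁻¹ →
      ENNReal.ofReal 2⁻¹ ≤ ∫⁻ x, Φ k (x, y) := by
    intro m k y hGm hθy
    set ε : ℝ≥0∞ := ((m : ℝ≥0∞) + 1)⁻¹ with hεdef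
    -- generic lower bound producing witnesses
    have hwit : ∀ (s : Set ℝ), MeasurableSet s → (∀ x ∈ s, (x, y) ∈ RF) →
        ε ≤ volume s → (∀ x ∈ s, ¬(|Gk k (x, y) - f (T (x, y))| ≤ 4⁻¹)) → False := by
      intro s hsmeas hsRF hsvol hcon
      have hlow : ∀ x ∈ s, ENNReal.ofReal 4⁻¹ ≤ Ψ k (x, y) := by
        intro x hx
        rw [hΨdef]
        simp only []
        rw [indicator_of_mem (hsRF x hx)]
        exact ofReal_le_ofReal (not_le.1 (hcon x hx)).le
      have hth : ENNReal.ofReal 4⁻¹ * ε ≤ θ k y := by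
        calc ENNReal.ofReal 4⁻¹ * ε ≤ ENNReal.ofReal 4⁻¹ * volume s := mul_le_mul_right hsvol _
          _ = ∫⁻ x in s, ENNReal.ofReal 4⁻¹ := (setLIntegral_const _ _).symm
          _ ≤ ∫⁻ x in s, Ψ k (x, y) := setLIntegral_mono' hsmeas hlow
          _ ≤ θ k y := setLIntegral_le_lintegral _ _
      exact absurd (hth.trans_lt hθy) (lt_irrefl _)
    -- first witness
    have hx1 : ∃ x₁, L x₁ y ∈ E'' ∧ |fn k (L x₁ y) - 1| ≤ 4⁻¹ := by
      by_contra hcon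
      push_neg at hcon
      refine hwit {x : ℝ | L x y ∈ E''} (hslice_meas y)
        (fun x hx => hER hx) (hGm.trans (min_le_left _ _)) ?_
      intro x hx
      have hmem : (x, y) ∈ RF := hER hx
      have hGv : Gk k (x, y) = fn k (L x y) := by
        rw [hGkdef]
        simp only []
        rw [indicator_of_mem (show (x, y) ∈ T ⁻¹' U from hRU hmem)]
      rw [hGv]
      show ¬(|fn k (L x y) - f (T (x, y))| ≤ 4⁻¹)
      rw [show f (T (x, y)) = 1 from hf1 _ hx]
      exact not_le.2 (hcon x hx)
    obtain ⟨x₁, hx₁E, hx₁v⟩ := hx1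
    obtain ⟨x₀, hx₀ge, hIccR, hIocf⟩ := hgeom y x₁ hx₁E
    -- second witness
    have hx0' : ∃ x', x' ∈ Ioc (x₀ - δ/2) x₀ ∧ |fn k (L x' y)| ≤ 4⁻¹ := by
      by_contra hcon
      push_neg at hcon
      refine hwit (Ioc (x₀ - δ/2) x₀) measurableSet_Ioc
        (fun t ht => hIccR t ⟨by linarith [ht.1, hx₀ge], ht.2⟩) ?_ ?_
      · rw [Real.volume_Ioc, show x₀ - (x₀ - δ/2) = δ/2 by ring]
        exact hGm.trans (min_le_right _ _)
      · intro t ht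
        have hmem : (t, y) ∈ RF := hIccR t ⟨by linarith [ht.1, hx₀ge], ht.2⟩
        have hGv : Gk k (t, y) = fn k (L t y) := by
          rw [hGkdef]
          simp only []
          rw [indicator_of_mem (show (t, y) ∈ T ⁻¹' U from hRU hmem)]
        rw [hGv]
        show ¬(|fn k (L t y) - f (T (t, y))| ≤ 4⁻¹)
        rw [show f (T (t, y)) = (0:ℝ) from hIocf t ht, sub_zero]
        exact not_le.2 (hcon t ht)
    obtain ⟨x₀', hx₀'I, hx₀'v⟩ := hx0'
    have hx₁le : x₁ ≤ x₀' := by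
      have := hx₀'I.1
      linarith [hx₀ge]
    have hIcc_sub : ∀ t ∈ Icc x₁ x₀', L t y ∈ R := fun t ht =>
      hIccR t ⟨ht.1, ht.2.trans hx₀'I.2⟩
    -- uniform Lipschitz constant on the segment
    set ψ : ℝ → ℝ := fun t => fn k (L t y) with hψdef
    have hline_cont : Continuous fun t : ℝ => L t y :=
      hLcont.comp (continuous_id.prodMk continuous_const)
    have hsegC : IsCompact ((fun t => L t y) '' Icc x₁ x₀') :=
      isCompact_Icc.image hline_cont
    have hsegU : (fun t => L t y) '' Icc x₁ x₀' ⊆ U := by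
      rintro _ ⟨t, ht, rfl⟩
      exact hRU (hIcc_sub t ht)
    obtain ⟨ρ, hρ, K, hKlip⟩ := loclip_compact (hLip k) hsegC hsegU
    have hψlip : ∀ t ∈ Icc x₁ x₀', LipschitzOnWith K ψ (ball t ρ) := by
      intro t ht u hu v hv
      have hdb : ∀ w ∈ ball t ρ, L w y ∈ ball (L t y) ρ := by
        intro w hw
        rw [mem_ball, hiso y w t]
        rw [mem_ball, Real.dist_eq] at hw
        exact hw
      have hed : edist (L u y) (L v y) = edist u v := by
        rw [edist_dist, edist_dist, hiso y u v, Real.dist_eq]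
      have hl := hKlip (L t y) (mem_image_of_mem _ ht) (hdb u hu) (hdb v hv)
      rw [hed] at hl
      exact hl
    have h1d := jump_abs_le_lintegral_lipa ψ hx₁le hρ K hψlip
    have hjv : (2⁻¹ : ℝ) ≤ |ψ x₀' - ψ x₁| := by
      have e1 : (3:ℝ)/4 ≤ ψ x₁ := by
        have := abs_le.1 hx₁v
        rw [hψdef]
        simp only []
        linarith [this.1]
      have e2 : ψ x₀' ≤ 4⁻¹ := by
        have := abs_le.1 hx₀'v
        rw [hψdef]
        simp only []
        linarith [this.2]
      rw [abs_sub_comm]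
      calc (2⁻¹ : ℝ) ≤ ψ x₁ - ψ x₀' := by linarith
        _ ≤ |ψ x₁ - ψ x₀'| := le_abs_self _
    calc ENNReal.ofReal 2⁻¹ ≤ ENNReal.ofReal |ψ x₀' - ψ x₁| := ofReal_le_ofReal hjv
      _ ≤ ∫⁻ t in Icc x₁ x₀', lipa ψ t := h1d
      _ ≤ ∫⁻ t in Icc x₁ x₀', lipa (fn k) (L t y) :=
          lintegral_mono fun t => lipa_comp_line (fn k) (fun s => L s y)
            (fun u v => by rw [hiso y u v, Real.dist_eq]) t
      _ = ∫⁻ t in Icc x₁ x₀', Φ k (t, y) := by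
          apply setLIntegral_congr_fun measurableSet_Icc
          intro t ht
          rw [hΦdef]
          simp only []
          rw [indicator_of_mem (by exact hIcc_sub t ht : (t, y) ∈ RF)]
      _ ≤ ∫⁻ x, Φ k (x, y) := setLIntegral_le_lintegral _ _
  -- Chebyshev and limits
  set Gm : ℕ → Set ℝ :=
    fun m => {y | ((m : ℝ≥0∞) + 1)⁻¹ ≤ min (slm y) (ENNReal.ofReal (δ/2))} with hGmdef
  have hGm_meas : ∀ m, MeasurableSet (Gm m) :=
    fun m => measurableSet_le measurable_const (hslm_meas.min measurable_const)
  have hmain : ∀ m, ENNReal.ofReal 2⁻¹ * volume (Gm m) ≤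
      atTop.liminf fun k => ∫⁻ p in U, lipa (fn k) p ∂mws := by
    intro m
    set εm : ℝ≥0∞ := ENNReal.ofReal 4⁻¹ * ((m : ℝ≥0∞) + 1)⁻¹ with hεmdef
    have hεm0 : εm ≠ 0 := by
      rw [hεmdef]
      apply mul_ne_zero
      · simp
      · exact ENNReal.inv_ne_zero.2 (by simp)
    have hεmtop : εm ≠ ⊤ := by
      rw [hεmdef]
      exact (ENNReal.mul_lt_top ofReal_lt_top (ENNReal.inv_lt_top.2 (lt_of_lt_of_le zero_lt_one le_add_self))).ne
    apply le_liminf_add_of_tendsto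
      (v := fun k => ENNReal.ofReal 2⁻¹ * (εm⁻¹ * Θ k))
    · intro k
      set Good : Set ℝ := Gm m ∩ {y | θ k y < εm} with hGooddef
      set Bad : Set ℝ := {y | εm ≤ θ k y} with hBaddef
      have hGood_meas : MeasurableSet Good :=
        (hGm_meas m).inter (measurableSet_lt (hθ_meas k) measurable_const)
      have hsplit : volume (Gm m) ≤ volume Good + volume Bad := by
        refine le_trans (measure_mono fun y hy => ?_) (measure_union_le _ _)
        by_cases h : θ k y < εm
        · exact Or.inl ⟨hy, h⟩
        · exact Or.inr (not_lt.1 h)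
      have hGood : ENNReal.ofReal 2⁻¹ * volume Good ≤ ∫⁻ p in U, lipa (fn k) p ∂mws := by
        refine le_trans ?_ (hX_ge k)
        calc ENNReal.ofReal 2⁻¹ * volume Good
            = ∫⁻ y in Good, ENNReal.ofReal 2⁻¹ := (setLIntegral_const _ _).symm
          _ ≤ ∫⁻ y in Good, ∫⁻ x, Φ k (x, y) := by
              apply setLIntegral_mono' hGood_meas
              intro y hy
              exact hjump m k y hy.1 hy.2
          _ ≤ ∫⁻ y, ∫⁻ x, Φ k (x, y) := setLIntegral_le_lintegral _ _
      have hBad : volume Bad ≤ εm⁻¹ * Θ k := by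
        have hcheb := mul_meas_ge_le_lintegral₀ (μ := (volume : Measure ℝ)) (hθ_meas k).aemeasurable εm
        calc volume Bad = εm⁻¹ * (εm * volume Bad) := by
              rw [← mul_assoc, ENNReal.inv_mul_cancel hεm0 hεmtop, one_mul]
          _ ≤ εm⁻¹ * Θ k := by
              apply mul_le_mul_right
              exact hcheb.trans_eq (hθ_int k)
      calc ENNReal.ofReal 2⁻¹ * volume (Gm m)
          ≤ ENNReal.ofReal 2⁻¹ * (volume Good + volume Bad) := mul_le_mul_right hsplit _
        _ = ENNReal.ofReal 2⁻¹ * volume Good + ENNReal.ofReal 2⁻¹ * volume Bad := mul_add _ _ _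
        _ ≤ (∫⁻ p in U, lipa (fn k) p ∂mws) + ENNReal.ofReal 2⁻¹ * (εm⁻¹ * Θ k) :=
            add_le_add hGood (mul_le_mul_right hBad _)
    · have h1 : Tendsto (fun k => εm⁻¹ * Θ k) atTop (𝓝 (εm⁻¹ * 0)) :=
        ENNReal.Tendsto.const_mul hΘ0 (Or.inr (ENNReal.inv_ne_top.2 hεm0))
      rw [mul_zero] at h1
      have h2 : Tendsto (fun k => ENNReal.ofReal 2⁻¹ * (εm⁻¹ * Θ k)) atTop
          (𝓝 (ENNReal.ofReal 2⁻¹ * 0)) :=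
        ENNReal.Tendsto.const_mul h1 (Or.inr ofReal_ne_top)
      rwa [mul_zero] at h2
  -- union over m
  have hUnion : {y : ℝ | 0 < slm y} = ⋃ m, Gm m := by
    ext y
    simp only [mem_setOf_eq, mem_iUnion]
    constructor
    · intro hy
      have hmin : 0 < min (slm y) (ENNReal.ofReal (δ/2)) := by
        apply lt_min hy
        rw [ofReal_pos]
        linarith
      obtain ⟨m, hm⟩ := ENNReal.exists_inv_nat_lt hmin.ne'
      exact ⟨m, le_trans (ENNReal.inv_le_inv.2 (by
        exact_mod_cast le_add_right le_rfl)) hm.le⟩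
    · rintro ⟨m, hm⟩
      calc (0:ℝ≥0∞) < ((m : ℝ≥0∞) + 1)⁻¹ := ENNReal.inv_pos.2 (by simp)
        _ ≤ min (slm y) (ENNReal.ofReal (δ/2)) := hm
        _ ≤ slm y := min_le_left _ _
  have hmono : Monotone Gm := by
    intro m m' hmm' y hy
    have hy' : ((m : ℝ≥0∞) + 1)⁻¹ ≤ min (slm y) (ENNReal.ofReal (δ/2)) := hy
    show ((m' : ℝ≥0∞) + 1)⁻¹ ≤ min (slm y) (ENNReal.ofReal (δ/2))
    refine le_trans ?_ hy'
    apply ENNReal.inv_le_inv.2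
    exact add_le_add_left (by exact_mod_cast hmm' : (m:ℝ≥0∞) ≤ m') 1
  calc ENNReal.ofReal 2⁻¹ * volume {y : ℝ | 0 < volume {x : ℝ | L x y ∈ E''}}
      = ENNReal.ofReal 2⁻¹ * volume (⋃ m, Gm m) := by rw [← hUnion]
    _ = ENNReal.ofReal 2⁻¹ * ⨆ m, volume (Gm m) := by
        rw [(hmono.directed_le).measure_iUnion]
    _ = ⨆ m, ENNReal.ofReal 2⁻¹ * volume (Gm m) := by rw [ENNReal.mul_iSup]
    _ ≤ atTop.liminf fun k => ∫⁻ p in U, lipa (fn k) p ∂mws := iSup_le hmain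

end IsoCore

/-- In the weighted plane, there is `C > 0` such that for every `n ≥ 1` and
every Borel `A ⊆ Ω` of finite perimeter,
`Per(A ∩ cl(T_n); cl(T_n)) ≥ C · (L²(A ∩ T_n))^{1/2}`. -/
theorem isoperimetric_in_triangles :
    ∃ C : ℝ, 0 < C ∧ ∀ n : ℕ, 1 ≤ n →
      ∀ A : Set Plane, A ⊆ Ωset → MeasurableSet A → per mws A < ⊤ →
        ENNReal.ofReal C * (volume (A ∩ Tn n)) ^ (1/2 : ℝ) ≤
          perIn mws (A ∩ closure (Tn n)) (closure (Tn n)) := by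
  classical
  refine ⟨4⁻¹, by norm_num, ?_⟩
  intro n hn A hA hAmeas hper
  have hc : 0 < IsoHelp.cfn n := IsoHelp.cfn_pos n
  set c : ℝ := IsoHelp.cfn n with hcdef
  set E : Set Plane := A ∩ closure (Tn n) with hEdef
  set f : Plane → ℝ := E.indicator 1 with hfdef
  have hEmeas : MeasurableSet E := hAmeas.inter isClosed_closure.measurableSet
  have hfmeas : Measurable f := measurable_one.indicator hEmeas
  unfold perIn totVar
  refine le_iInf fun U => le_iInf fun hUopen => le_iInf fun hUsub => ?_
  unfold totVarOpen
  refine le_iInf fun fn => le_iInf fun hLip => le_iInf fun hconv => ?_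
  obtain ⟨δ, hδ, hthick⟩ :=
    (IsoHelp.isCompact_closure_Tn n).exists_thickening_subset_open hUopen hUsub
  set R : Set Plane := thickening δ (closure (Tn n)) ∩ {p : Plane | 0 < p 1} with hRdef
  have hRmeas : MeasurableSet R :=
    (isOpen_thickening.inter (isOpen_lt continuous_const (IsoHelp.continuous_coord 1))).measurableSet
  set E'' : Set Plane := (A ∩ Tn n) ∩ R with hE''def
  have hE''meas : MeasurableSet E'' := (hAmeas.inter (IsoHelp.measurableSet_Tn n)).inter hRmeas
  have hER : E'' ⊆ thickening δ (closure (Tn n)) ∩ {p : Plane | 0 < p 1} := fun p hp => hp.2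
  have hf1 : ∀ p ∈ E'', f p = 1 := by
    intro p hp
    rw [hfdef]
    rw [indicator_of_mem (show p ∈ E from ⟨hp.1.1, subset_closure hp.1.2⟩)]
    rfl
  have hfE0 : ∀ p, p ∉ closure (Tn n) → f p = 0 := by
    intro p hp
    rw [hfdef]
    exact indicator_of_notMem (fun hmem => hp hmem.2) _
  -- horizontal geometry
  have hgeomH : ∀ y x₁ : ℝ, pt x₁ y ∈ E'' → ∃ x₀, x₁ + δ/2 ≤ x₀ ∧
      (∀ t ∈ Icc x₁ x₀, pt t y ∈ thickening δ (closure (Tn n)) ∩ {p : Plane | 0 < p 1}) ∧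
      (∀ t ∈ Ioc (x₀ - δ/2) x₀, f (pt t y) = 0) := by
    intro y x₁ hx₁
    have hTn : pt x₁ y ∈ Tn n := hx₁.1.2
    rw [IsoHelp.mem_Tn_iff] at hTn
    simp only [IsoHelp.pt_zero, IsoHelp.pt_one, ← hcdef] at hTn
    obtain ⟨hy0, hx₁l, hx₁u⟩ := hTn
    have hy : 0 < y := hx₁.2.2
    refine ⟨2*c - y + δ/2, by linarith, ?_, ?_⟩
    · intro t ht
      refine ⟨?_, hy⟩
      rcases le_or_gt t (2*c - y) with hle | hlt
      · exact self_subset_thickening hδ _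
          (IsoHelp.mem_closure_Tn hy0 (by linarith [ht.1]) hle)
      · rw [Metric.mem_thickening_iff]
        refine ⟨pt (2*c - y) y, IsoHelp.mem_closure_Tn hy0 (by linarith) le_rfl, ?_⟩
        rw [IsoHelp.dist_pt_horiz, abs_of_pos (by linarith)]
        linarith [ht.2]
    · intro t ht
      apply hfE0
      intro hcl
      have hK := IsoHelp.closure_Tn_subset n hcl
      have h2 := hK.2.2
      simp only [IsoHelp.pt_zero, IsoHelp.pt_one, ← hcdef] at h2
      linarith [ht.1]
  -- vertical geometry
  have hgeomV : ∀ x t₁ : ℝ, pt x t₁ ∈ E'' → ∃ x₀, t₁ + δ/2 ≤ x₀ ∧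
      (∀ t ∈ Icc t₁ x₀, pt x t ∈ thickening δ (closure (Tn n)) ∩ {p : Plane | 0 < p 1}) ∧
      (∀ t ∈ Ioc (x₀ - δ/2) x₀, f (pt x t) = 0) := by
    intro x t₁ hx₁
    have hTn : pt x t₁ ∈ Tn n := hx₁.1.2
    rw [IsoHelp.mem_Tn_iff] at hTn
    simp only [IsoHelp.pt_zero, IsoHelp.pt_one, ← hcdef] at hTn
    obtain ⟨ht₁0, hl, hu⟩ := hTn
    have ht₁ : 0 < t₁ := hx₁.2.2
    have htop1 : t₁ < min (x - c) (2*c - x) := lt_min (by linarith) (by linarith)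
    refine ⟨min (x - c) (2*c - x) + δ/2, by linarith, ?_, ?_⟩
    · intro t ht
      refine ⟨?_, lt_of_lt_of_le ht₁ ht.1⟩
      rcases le_or_gt t (min (x - c) (2*c - x)) with hle | hlt
      · apply self_subset_thickening hδ
        apply IsoHelp.mem_closure_Tn (by linarith [ht.1])
        · have := hle.trans (min_le_left _ _); linarith
        · have := hle.trans (min_le_right _ _); linarith
      · rw [Metric.mem_thickening_iff]
        refine ⟨pt x (min (x - c) (2*c - x)), ?_, ?_⟩
        · apply IsoHelp.mem_closure_Tn (by linarith)
          · have := min_le_left (x-c) (2*c-x); linarith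
          · have := min_le_right (x-c) (2*c-x); linarith
        · rw [IsoHelp.dist_pt_vert, abs_of_pos (by linarith)]
          linarith [ht.2]
    · intro t ht
      apply hfE0
      intro hcl
      have hK := IsoHelp.closure_Tn_subset n hcl
      have h1 := hK.2.1
      have h2 := hK.2.2
      simp only [IsoHelp.pt_zero, IsoHelp.pt_one, ← hcdef] at h1 h2
      have hmin : t ≤ min (x - c) (2*c - x) := le_min (by linarith) (by linarith)
      linarith [ht.1]
  -- apply the core lemma in both directions
  have Hh := iso_core n U hUopen fn hLip f hfmeas hconv δ hδ hthick E'' hE''meas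
    (fun x y => pt x y) IsoHelp.Tmap_mp IsoHelp.Tmap_emb IsoHelp.Tmap_cont
    (fun y u v => IsoHelp.dist_pt_horiz u v y) hER hf1 hgeomH
  have hswap : MeasurePreserving (Prod.swap : ℝ × ℝ → ℝ × ℝ) volume volume := by
    have h := Measure.measurePreserving_swap (μ := (volume : Measure ℝ)) (ν := (volume : Measure ℝ))
    rwa [← Measure.volume_eq_prod] at h
  have hmpV : MeasurePreserving (fun q : ℝ × ℝ => pt q.2 q.1) volume volume := by
    exact IsoHelp.Tmap_mp.comp hswap
  have hembV : MeasurableEmbedding (fun q : ℝ × ℝ => pt q.2 q.1) := by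
    exact IsoHelp.Tmap_emb.comp (MeasurableEquiv.prodComm (α := ℝ) (β := ℝ)).measurableEmbedding
  have hcontV : Continuous (fun q : ℝ × ℝ => pt q.2 q.1) :=
    IsoHelp.pt_continuous continuous_snd continuous_fst
  have Hv := iso_core n U hUopen fn hLip f hfmeas hconv δ hδ hthick E'' hE''meas
    (fun x y => pt y x) hmpV hembV hcontV
    (fun y u v => IsoHelp.dist_pt_vert y u v) hER hf1 hgeomV
  -- comparison of volumes
  have hvol1 : volume (A ∩ Tn n) ≤ volume E'' := by
    have hsplit := measure_le_inter_add_diff (volume : Measure Plane) (A ∩ Tn n) R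
    have hnull : volume ((A ∩ Tn n) \ R) = 0 := by
      apply measure_mono_null ?_ IsoHelp.volume_line_zero
      intro p hp
      have hTn := hp.1.2
      rw [IsoHelp.mem_Tn_iff] at hTn
      have h1 : ¬ (0 < p 1) := by
        intro h0
        exact hp.2 ⟨self_subset_thickening hδ _ (subset_closure hp.1.2), h0⟩
      exact le_antisymm (not_lt.1 h1) hTn.1
    calc volume (A ∩ Tn n) ≤ volume ((A ∩ Tn n) ∩ R) + volume ((A ∩ Tn n) \ R) := hsplit
      _ = volume E'' := by rw [hnull, add_zero]
  have hF : MeasurableSet (IsoHelp.Tmap ⁻¹' E'') := IsoHelp.Tmap_emb.measurable hE''meas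
  have hvolF : volume E'' = volume (IsoHelp.Tmap ⁻¹' E'') :=
    (IsoHelp.Tmap_mp.measure_preimage hE''meas.nullMeasurableSet).symm
  have hprod := IsoHelp.prod_slice_bound _ hF
  set VV : ℝ≥0∞ := volume {y : ℝ | 0 < volume {x : ℝ | pt y x ∈ E''}} with hVVdef
  set GG : ℝ≥0∞ := volume {y : ℝ | 0 < volume {x : ℝ | pt x y ∈ E''}} with hGGdef
  have hAM : volume (A ∩ Tn n) ≤ max VV GG * max VV GG := by
    refine hvol1.trans ?_
    rw [hvolF]
    refine hprod.trans ?_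
    refine mul_le_mul' ?_ ?_
    · exact le_max_left VV GG
    · exact le_max_right VV GG
  have hlimM : ENNReal.ofReal 2⁻¹ * max VV GG ≤
      atTop.liminf fun k => ∫⁻ x in U, lipa (fn k) x ∂mws := by
    rcases le_total VV GG with h | h
    · rw [max_eq_right h]; exact Hh
    · rw [max_eq_left h]; exact Hv
  have hMM : (max VV GG * max VV GG) ^ (1/2:ℝ) = max VV GG := by
    rw [← pow_two, ← ENNReal.rpow_natCast (max VV GG) 2, ← ENNReal.rpow_mul]
    norm_num
  calc ENNReal.ofReal 4⁻¹ * (volume (A ∩ Tn n)) ^ (1/2:ℝ)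
      ≤ ENNReal.ofReal 4⁻¹ * (max VV GG * max VV GG) ^ (1/2:ℝ) :=
        mul_le_mul_right (ENNReal.rpow_le_rpow hAM (by norm_num)) _
    _ = ENNReal.ofReal 4⁻¹ * max VV GG := by rw [hMM]
    _ ≤ ENNReal.ofReal 2⁻¹ * max VV GG :=
        mul_le_mul_left (ofReal_le_ofReal (by norm_num)) _
    _ ≤ atTop.liminf fun k => ∫⁻ x in U, lipa (fn k) x ∂mws := hlimM
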